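/- Every strong tournament on at least 3 vertices has at least 3 distinct minimal feedback vertex sets. -/

import Mathlib

/-- A set `W` of vertices is acyclic if the digraph `r` restricted to `W`
has no directed cycle (the transitive closure restricted to `W` is irreflexive). -/
def AcyclicOn {V : Type*} (r : V → V → Prop) (W : Set V) : Prop :=
  ∀ v : V, ¬ Relation.TransGen (fun a b => a ∈ W ∧ b ∈ W ∧ r a b) v v

/-- A tournament: an irreflexive relation with exactly one arc between
every pair of distinct vertices. -/
def IsTournament {V : Type*} (r : V → V → Prop) : Prop :=
  (∀ v : V, ¬ r v v) ∧ ∀ u v : V, u ≠ v → (r u v ↔ ¬ r v u)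

/-- A feedback vertex set: its deletion leaves an acyclic digraph. -/
def IsFVS {V : Type*} (r : V → V → Prop) (F : Set V) : Prop :=
  AcyclicOn r Fᶜ

/-- A minimal feedback vertex set. -/
def IsMinimalFVS {V : Type*} (r : V → V → Prop) (F : Set V) : Prop :=
  IsFVS r F ∧ ∀ F' : Set V, F' ⊆ F → IsFVS r F' → F' = F

/-- A feedback vertex set of the subtournament induced on `S`. -/
def IsFVSOn {V : Type*} (r : V → V → Prop) (S F : Set V) : Prop :=
  F ⊆ S ∧ AcyclicOn r (S \ F)

/-- A minimal feedback vertex set of the subtournament induced on `S`. -/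
def IsMinimalFVSOn {V : Type*} (r : V → V → Prop) (S F : Set V) : Prop :=
  IsFVSOn r S F ∧ ∀ F' : Set V, F' ⊆ F → IsFVSOn r S F' → F' = F

/-- Strong (strongly connected): a directed path between any ordered pair. -/
def IsStrong {V : Type*} (r : V → V → Prop) : Prop :=
  ∀ u v : V, Relation.ReflTransGen r u v

/-- The subtournament induced on `S` is strong. -/
def IsStrongOn {V : Type*} (r : V → V → Prop) (S : Set V) : Prop :=
  ∀ u ∈ S, ∀ v ∈ S, Relation.ReflTransGen (fun a b => a ∈ S ∧ b ∈ S ∧ r a b) u v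

/-- The score (out-degree) of a vertex. -/
noncomputable def outScore {V : Type*} (r : V → V → Prop) (v : V) : ℕ :=
  {u : V | r v u}.ncard

/-- The number of minimal feedback vertex sets of a tournament. -/
noncomputable def fvsCount (V : Type*) (r : V → V → Prop) : ℕ :=
  {F : Set V | IsMinimalFVS r F}.ncard

/-- `maxMinFVS n` = maximum number of minimal FVSs over all `n`-vertex tournaments. -/
noncomputable def maxMinFVS (n : ℕ) : ℕ :=
  sSup {k : ℕ | ∃ r : Fin n → Fin n → Prop, IsTournament r ∧ fvsCount (Fin n) r = k}


section Aux

variable {V : Type*} {r : V → V → Prop}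

lemma acyclicOn_of_trans {s : V → V → Prop} (ht : Transitive s)
    (hi : ∀ a, ¬ s a a) (v : V) : ¬ Relation.TransGen s v v := fun h =>
  hi v ((@Relation.transGen_eq_self V s ⟨fun _ _ _ h1 h2 => ht h1 h2⟩) ▸ h)

lemma acyclicOn_pair (hT : IsTournament r) (u v : V) :
    AcyclicOn r {u, v} := by
  intro w
  apply acyclicOn_of_trans
  · rintro a b c ⟨ha, hb, hab⟩ ⟨hb', hc, hbc⟩
    exfalso
    have hab' : a ≠ b := fun h => hT.1 b (h ▸ hab)
    have hbc' : b ≠ c := fun h => hT.1 c (h ▸ hbc)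
    have hac : a = c := by
      rcases ha with rfl | rfl <;> rcases hb with rfl | rfl <;>
        rcases hc with rfl | rfl <;> simp_all
    exact ((hT.2 a b hab').mp hab) (hac ▸ hbc)
  · rintro a ⟨_, _, h⟩; exact hT.1 a h

lemma acyclicOn_singleton (hT : IsTournament r) (v : V) :
    AcyclicOn r {v} := by
  have := acyclicOn_pair hT v v
  simpa using this

lemma not_acyclicOn_univ (hT : IsTournament r) (hS : IsStrong r)
    {u v : V} (huv : u ≠ v) : ¬ AcyclicOn r Set.univ := by
  intro h
  have harc : r u v ∨ r v u := by
    by_cases h' : r u v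
    · exact Or.inl h'
    · exact Or.inr (not_not.mp (fun hh => h' (((hT.2 u v huv).mpr) hh)))
  have key : ∀ a b : V, r a b → False := by
    intro a b hab
    have hpath : Relation.ReflTransGen
        (fun x y => x ∈ (Set.univ : Set V) ∧ y ∈ (Set.univ : Set V) ∧ r x y) b a :=
      Relation.ReflTransGen.mono (p := fun x y => x ∈ (Set.univ : Set V) ∧ y ∈ (Set.univ : Set V) ∧ r x y) (fun x y hxy => ⟨trivial, trivial, hxy⟩) b a (hS b a)
    exact h a (Relation.TransGen.head' ⟨trivial, trivial, hab⟩ hpath)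
  rcases harc with h' | h'
  · exact key u v h'
  · exact key v u h'

/-- Every acyclic set extends to a maximal acyclic set. -/
lemma exists_maximal_acyclic [Finite V] {A : Set V} (hA : AcyclicOn r A) :
    ∃ W : Set V, A ⊆ W ∧ AcyclicOn r W ∧
      ∀ W', W ⊆ W' → AcyclicOn r W' → W' = W := by
  obtain ⟨W, hAW, hW⟩ := Finite.exists_le_maximal (p := fun S => AcyclicOn r S) hA
  exact ⟨W, hAW, hW.1, fun W' hWW' hW' => le_antisymm (hW.2 hW' hWW') hWW'⟩

lemma minimalFVS_of_maximal_acyclic {W : Set V} (hW : AcyclicOn r W)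
    (hmax : ∀ W', W ⊆ W' → AcyclicOn r W' → W' = W) :
    IsMinimalFVS r Wᶜ := by
  constructor
  · show AcyclicOn r Wᶜᶜ
    rwa [compl_compl]
  · intro F' hF' hF'fvs
    have h1 : W ⊆ F'ᶜ := by
      rw [← compl_compl W]
      exact Set.compl_subset_compl.mpr hF'
    have h2 : F'ᶜ = W := hmax _ h1 hF'fvs
    rw [← compl_compl F', h2]

end Aux


/-- Every strong tournament on at least 3 vertices has at least 3 minimal FVSs. -/
theorem stmt1 {V : Type*} [Fintype V] (r : V → V → Prop)
    (hT : IsTournament r) (hS : IsStrong r) (hn : 3 ≤ Fintype.card V) :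
    3 ≤ {F : Set V | IsMinimalFVS r F}.ncard := by
  classical
  -- obtain two distinct vertices
  have h2 : 1 < Fintype.card V := by omega
  obtain ⟨u0, v0, huv0⟩ := Fintype.exists_pair_of_one_lt_card h2
  -- first maximal acyclic set
  obtain ⟨W1, _, hW1ac, hW1max⟩ := exists_maximal_acyclic (acyclicOn_singleton hT u0)
  have hW1ne : W1 ≠ Set.univ := fun h => not_acyclicOn_univ hT hS huv0 (h ▸ hW1ac)
  obtain ⟨v, hv⟩ := (Set.ne_univ_iff_exists_notMem W1).mp hW1ne
  -- second maximal acyclic set containing v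
  obtain ⟨W2, hvW2, hW2ac, hW2max⟩ := exists_maximal_acyclic (acyclicOn_singleton hT v)
  have hvW2' : v ∈ W2 := hvW2 rfl
  have hW2ne : W2 ≠ Set.univ := fun h => not_acyclicOn_univ hT hS huv0 (h ▸ hW2ac)
  obtain ⟨u, hu⟩ := (Set.ne_univ_iff_exists_notMem W2).mp hW2ne
  have huv : u ≠ v := fun h => hu (h ▸ hvW2')
  -- third maximal acyclic set containing both u and v
  obtain ⟨W3, hpW3, hW3ac, hW3max⟩ := exists_maximal_acyclic (acyclicOn_pair hT u v)
  have huW3 : u ∈ W3 := hpW3 (Or.inl rfl)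
  have hvW3 : v ∈ W3 := hpW3 (Or.inr rfl)
  -- distinctness
  have h12 : W1 ≠ W2 := fun h => hv (h ▸ hvW2')
  have h13 : W1 ≠ W3 := fun h => hv (h ▸ hvW3)
  have h23 : W2 ≠ W3 := fun h => hu (h ▸ huW3)
  -- the three minimal FVSs
  have hc12 : W1ᶜ ≠ W2ᶜ := fun h => h12 (compl_injective h)
  have hc13 : W1ᶜ ≠ W3ᶜ := fun h => h13 (compl_injective h)
  have hc23 : W2ᶜ ≠ W3ᶜ := fun h => h23 (compl_injective h)
  have hsub : {W1ᶜ, W2ᶜ, W3ᶜ} ⊆ {F : Set V | IsMinimalFVS r F} := by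
    rintro F (rfl | rfl | rfl)
    · exact minimalFVS_of_maximal_acyclic hW1ac hW1max
    · exact minimalFVS_of_maximal_acyclic hW2ac hW2max
    · exact minimalFVS_of_maximal_acyclic hW3ac hW3max
  have h3 : ({W1ᶜ, W2ᶜ, W3ᶜ} : Set (Set V)).ncard = 3 :=
    Set.ncard_eq_three.mpr ⟨_, _, _, hc12, hc13, hc23, rfl⟩
  calc 3 = ({W1ᶜ, W2ᶜ, W3ᶜ} : Set (Set V)).ncard := h3.symm
    _ ≤ _ := Set.ncard_le_ncard hsub (Set.toFinite _)
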